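/- Let n ≥ 2 be an integer, c' > 0 a real constant, p ≥ 0 a real number, and v ≥ 1 an integer, such that np ≤ c' log n and 2v ≤ c' log n. If Y ~ Poisson(np), then E[h_{v,0}(Y)^2] ≤ 2p · (2c' (log n) / n)^{2v−1}. -/

import Mathlib

open scoped BigOperators

/-- The Poisson probability mass function with mean `μ`: `Pr(Y = t) = e^{-μ} μ^t / t!`. -/
noncomputable def poissonPMF (μ : ℝ) (t : ℕ) : ℝ := Real.exp (-μ) * μ ^ t / t.factorial

/-- `h_{v,x}(y) = Σ_{l=0}^{v} binom(v,l) (-x)^{v-l} Π_{l'=0}^{l-1} ((y - l')/n)`. -/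
noncomputable def hfun (n : ℕ) (x : ℝ) (v : ℕ) (y : ℝ) : ℝ :=
  ∑ l ∈ Finset.range (v + 1), (v.choose l : ℝ) * (-x) ^ (v - l) *
    ∏ l' ∈ Finset.range l, ((y - l') / n)

lemma hfun_zero_eq (n v : ℕ) (y : ℝ) :
    hfun n 0 v y = ∏ l' ∈ Finset.range v, ((y - l') / n) := by
  unfold hfun
  rw [Finset.sum_eq_single v]
  · simp
  · intro l hl hne
    have h : v - l ≠ 0 := by
      have := Finset.mem_range.mp hl; omega
    simp [zero_pow h]
  · intro h; exact absurd (Finset.self_mem_range_succ v) h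

lemma prod_range_cast_sub (t v : ℕ) :
    ∏ i ∈ Finset.range v, ((t : ℝ) - i) = t.descFactorial v := by
  induction v with
  | zero => simp
  | succ v ih =>
    rw [Finset.prod_range_succ, ih, Nat.descFactorial_succ]
    rcases le_or_gt v t with h | h
    · push_cast [h]
      ring
    · rw [Nat.descFactorial_eq_zero_iff_lt.mpr h]
      simp

lemma hfun_zero_nat (n v t : ℕ) :
    hfun n 0 v (t : ℝ) = (t.descFactorial v : ℝ) / (n : ℝ) ^ v := by
  rw [hfun_zero_eq, Finset.prod_div_distrib, prod_range_cast_sub, Finset.prod_const,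
    Finset.card_range]

lemma termA (t v j : ℕ) (hj : j ≤ v) (htv : v ≤ t) :
    (v.choose j) ^ 2 * j.factorial * t.descFactorial (2 * v - j)
      = t.descFactorial v * v.factorial * (v.choose j * (t - v).choose (v - j)) := by
  have h1 : (t - v).descFactorial (v - j) * t.descFactorial v
      = t.descFactorial (2 * v - j) := by
    have h := Nat.descFactorial_mul_descFactorial
      (k := v) (m := 2 * v - j) (n := t) (by omega)
    rwa [show 2 * v - j - v = v - j by omega] at h
  have h2 : (t - v).descFactorial (v - j)
      = (v - j).factorial * (t - v).choose (v - j) :=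
    Nat.descFactorial_eq_factorial_mul_choose _ _
  have h3 : v.choose j * j.factorial * (v - j).factorial = v.factorial :=
    Nat.choose_mul_factorial_mul_factorial hj
  rw [← h3, ← h1, h2]
  ring

lemma descFactorial_sq (t v : ℕ) :
    t.descFactorial v * t.descFactorial v
      = ∑ j ∈ Finset.range (v + 1),
          (v.choose j) ^ 2 * j.factorial * t.descFactorial (2 * v - j) := by
  rcases lt_or_ge t v with h | h
  · rw [Nat.descFactorial_eq_zero_iff_lt.mpr h, Nat.mul_zero]
    refine (Finset.sum_eq_zero ?_).symm
    intro j hj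
    have hj' := Finset.mem_range.mp hj
    have hlt : t < 2 * v - j := by omega
    rw [Nat.descFactorial_eq_zero_iff_lt.mpr hlt, Nat.mul_zero]
  · have hvand : t.choose v
        = ∑ j ∈ Finset.range (v + 1), v.choose j * (t - v).choose (v - j) := by
      have h0 : v + (t - v) = t := by omega
      have hh := Nat.add_choose_eq v (t - v) v
      rw [h0, Finset.Nat.sum_antidiagonal_eq_sum_range_succ_mk] at hh
      exact hh
    have hd : t.descFactorial v = v.factorial * t.choose v :=
      Nat.descFactorial_eq_factorial_mul_choose _ _
    conv_lhs => rw [show t.descFactorial v * t.descFactorial v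
      = t.descFactorial v * (v.factorial * t.choose v) by rw [← hd]]
    rw [hvand]
    simp only [Finset.mul_sum]
    refine Finset.sum_congr rfl fun j hj => ?_
    have hj' : j ≤ v := by have := Finset.mem_range.mp hj; omega
    rw [termA t v j hj' h]
    ring

lemma factorial_eq_mul_descFactorial (s m : ℕ) :
    ((s + m).factorial : ℝ)
      = (s.factorial : ℝ) * ((s + m).descFactorial m : ℝ) := by
  have h := Nat.factorial_mul_descFactorial (n := s + m) (k := m) (Nat.le_add_left m s)
  rw [show s + m - m = s by omega] at h
  exact_mod_cast h.symm

lemma pmf_dF_shift (μ : ℝ) (m s : ℕ) :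
    poissonPMF μ (s + m) * ((s + m).descFactorial m : ℝ)
      = (Real.exp (-μ) * μ ^ m) * (μ ^ s / s.factorial) := by
  unfold poissonPMF
  have hs : ((s.factorial : ℝ)) ≠ 0 := by positivity
  have hd : ((s + m).descFactorial m : ℝ) ≠ 0 := by
    have hne : (s + m).descFactorial m ≠ 0 := by
      intro hz
      have := Nat.descFactorial_eq_zero_iff_lt.mp hz
      omega
    exact_mod_cast hne
  rw [factorial_eq_mul_descFactorial, pow_add]
  field_simp

lemma summable_pmf_dF {μ : ℝ} (m : ℕ) :
    Summable (fun t : ℕ => poissonPMF μ t * (t.descFactorial m : ℝ)) := by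
  set f : ℕ → ℝ := fun t => poissonPMF μ t * (t.descFactorial m : ℝ) with hf
  have hg : Function.Injective (fun s : ℕ => s + m) := add_left_injective m
  have hsupp : ∀ x ∉ Set.range (fun s : ℕ => s + m), f x = 0 := by
    intro x hx
    have hxm : x < m := by
      by_contra hc
      push_neg at hc
      exact hx ⟨x - m, by dsimp; omega⟩
    simp [hf, Nat.descFactorial_eq_zero_iff_lt.mpr hxm]
  rw [← Function.Injective.summable_iff hg hsupp]
  have : (f ∘ fun s : ℕ => s + m)
      = fun s => (Real.exp (-μ) * μ ^ m) * (μ ^ s / s.factorial) := by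
    funext s
    simp only [Function.comp, hf]
    exact pmf_dF_shift μ m s
  rw [this]
  exact (Real.summable_pow_div_factorial μ).mul_left _

lemma poisson_descFactorial_moment (μ : ℝ) (m : ℕ) :
    ∑' t : ℕ, poissonPMF μ t * (t.descFactorial m : ℝ) = μ ^ m := by
  set f : ℕ → ℝ := fun t => poissonPMF μ t * (t.descFactorial m : ℝ) with hf
  have hg : Function.Injective (fun s : ℕ => s + m) := add_left_injective m
  have hsupp : Function.support f ⊆ Set.range (fun s : ℕ => s + m) := by
    intro x hx
    by_contra hc
    apply hx
    have hxm : x < m := by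
      by_contra hc2
      push_neg at hc2
      exact hc ⟨x - m, by dsimp; omega⟩
    simp [hf, Nat.descFactorial_eq_zero_iff_lt.mpr hxm]
  have key := Function.Injective.tsum_eq hg hsupp
  rw [← key]
  have h1 : ∀ s : ℕ, f (s + m) = (Real.exp (-μ) * μ ^ m) * (μ ^ s / s.factorial) :=
    fun s => pmf_dF_shift μ m s
  calc ∑' s : ℕ, f (s + m)
      = ∑' s : ℕ, (Real.exp (-μ) * μ ^ m) * (μ ^ s / s.factorial) := tsum_congr h1
    _ = (Real.exp (-μ) * μ ^ m) * ∑' s : ℕ, (μ ^ s / s.factorial : ℝ) := tsum_mul_left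
    _ = (Real.exp (-μ) * μ ^ m) * Real.exp μ := by
        rw [Real.exp_eq_exp_ℝ, NormedSpace.exp_eq_tsum_div]
    _ = μ ^ m := by
        rw [Real.exp_neg]
        field_simp

theorem expectation_hfun_sq_le_small (n : ℕ) (hn : 2 ≤ n) (c' : ℝ) (hc' : 0 < c')
    (p : ℝ) (hp : 0 ≤ p) (v : ℕ) (hv : 1 ≤ v)
    (hnp : (n : ℝ) * p ≤ c' * Real.log n)
    (h2v : (2 * v : ℝ) ≤ c' * Real.log n) :
    ∑' t : ℕ, poissonPMF (n * p) t * (hfun n 0 v (t : ℝ)) ^ 2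
      ≤ 2 * p * (2 * c' * Real.log n / n) ^ (2 * v - 1) := by
  set μ : ℝ := (n : ℝ) * p with hμ
  set L : ℝ := c' * Real.log n with hL
  have hn0 : (0 : ℝ) < n := by positivity
  have hμ0 : 0 ≤ μ := by positivity
  have hL0 : 0 < L := lt_of_lt_of_le (by positivity) h2v
  have hμL : μ ≤ L := hnp
  -- step 1: rewrite the sum
  have step1 : ∑' t : ℕ, poissonPMF μ t * (hfun n 0 v (t : ℝ)) ^ 2
      = (1 / (n : ℝ) ^ (2 * v)) * ∑ j ∈ Finset.range (v + 1),
          ((v.choose j : ℝ) ^ 2 * j.factorial) * μ ^ (2 * v - j) := by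
    have e1 : ∀ t : ℕ, poissonPMF μ t * (hfun n 0 v (t : ℝ)) ^ 2
        = (1 / (n : ℝ) ^ (2 * v)) * ∑ j ∈ Finset.range (v + 1),
            ((v.choose j : ℝ) ^ 2 * j.factorial) *
              (poissonPMF μ t * (t.descFactorial (2 * v - j) : ℝ)) := by
      intro t
      rw [hfun_zero_nat]
      have hdsq : ((t.descFactorial v : ℝ)) * (t.descFactorial v : ℝ)
          = ∑ j ∈ Finset.range (v + 1),
              ((v.choose j : ℝ) ^ 2 * j.factorial) * (t.descFactorial (2 * v - j) : ℝ) := by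
        have := descFactorial_sq t v
        have := congrArg (fun k : ℕ => (k : ℝ)) this
        push_cast at this
        convert this using 2
      have hnv : ((n : ℝ) ^ v) ^ 2 = (n : ℝ) ^ (2 * v) := by
        rw [← pow_mul, mul_comm]
      calc poissonPMF μ t * ((t.descFactorial v : ℝ) / (n : ℝ) ^ v) ^ 2
          = (1 / (n : ℝ) ^ (2 * v)) *
              (poissonPMF μ t * ((t.descFactorial v : ℝ) * (t.descFactorial v : ℝ))) := by
            rw [div_pow, hnv, sq]
            ring
        _ = (1 / (n : ℝ) ^ (2 * v)) * (poissonPMF μ t * ∑ j ∈ Finset.range (v + 1),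
              ((v.choose j : ℝ) ^ 2 * j.factorial) * (t.descFactorial (2 * v - j) : ℝ)) := by
            rw [hdsq]
        _ = (1 / (n : ℝ) ^ (2 * v)) * ∑ j ∈ Finset.range (v + 1),
              ((v.choose j : ℝ) ^ 2 * j.factorial) *
                (poissonPMF μ t * (t.descFactorial (2 * v - j) : ℝ)) := by
            rw [Finset.mul_sum]
            congr 1
            refine Finset.sum_congr rfl fun j hj => ?_
            ring
    rw [tsum_congr e1, tsum_mul_left]
    congr 1
    have hsummable : ∀ j ∈ Finset.range (v + 1),
        Summable (fun t : ℕ => ((v.choose j : ℝ) ^ 2 * j.factorial) *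
          (poissonPMF μ t * (t.descFactorial (2 * v - j) : ℝ))) := by
      intro j _
      exact (summable_pmf_dF (2 * v - j)).mul_left _
    rw [Summable.tsum_finsetSum hsummable]
    refine Finset.sum_congr rfl fun j hj => ?_
    rw [tsum_mul_left, poisson_descFactorial_moment]
  rw [step1]
  -- step 2: bound the finite sum
  have hterm : ∀ j ∈ Finset.range (v + 1),
      ((v.choose j : ℝ) ^ 2 * j.factorial) * μ ^ (2 * v - j)
        ≤ 2 ^ v * L ^ (2 * v - 1) * μ := by
    intro j hj
    have hjv : j ≤ v := by have := Finset.mem_range.mp hj; omega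
    have hnat : (v.choose j) ^ 2 * j.factorial ≤ 2 ^ v * v ^ j := by
      have h1 : v.choose j ≤ 2 ^ v := by
        calc v.choose j ≤ ∑ i ∈ Finset.range (v + 1), v.choose i :=
              Finset.single_le_sum (fun i _ => Nat.zero_le _)
                (Finset.mem_range.mpr (by omega))
          _ = 2 ^ v := Nat.sum_range_choose v
      have h2 : j.factorial * v.choose j ≤ v ^ j := by
        rw [← Nat.descFactorial_eq_factorial_mul_choose]
        exact Nat.descFactorial_le_pow v j
      calc (v.choose j) ^ 2 * j.factorial
          = v.choose j * (j.factorial * v.choose j) := by ring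
        _ ≤ 2 ^ v * v ^ j := Nat.mul_le_mul h1 h2
    have hreal : ((v.choose j : ℝ) ^ 2 * j.factorial) ≤ 2 ^ v * (v : ℝ) ^ j := by
      exact_mod_cast hnat
    have hvL : (v : ℝ) ≤ L / 2 := by linarith
    have hv0 : (0 : ℝ) ≤ v := by positivity
    have hμpow : μ ^ (2 * v - j) = μ ^ (2 * v - 1 - j) * μ := by
      rw [← pow_succ]
      congr 1
      omega
    have hμle : μ ^ (2 * v - 1 - j) ≤ L ^ (2 * v - 1 - j) :=
      pow_le_pow_left₀ hμ0 hμL _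
    have hvle : (v : ℝ) ^ j ≤ (L / 2) ^ j := pow_le_pow_left₀ hv0 hvL _
    have hLhalf : (L / 2) ^ j * L ^ (2 * v - 1 - j) ≤ L ^ (2 * v - 1) := by
      rw [div_pow, div_mul_eq_mul_div, ← pow_add,
        show j + (2 * v - 1 - j) = 2 * v - 1 by omega]
      have h2j : (1 : ℝ) ≤ 2 ^ j := by
        have := pow_le_pow_left₀ (by norm_num : (0:ℝ) ≤ 1) (by norm_num : (1:ℝ) ≤ 2) j
        simpa using this
      rw [div_le_iff₀ (by positivity)]
      nlinarith [pow_nonneg hL0.le (2 * v - 1)]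
    calc ((v.choose j : ℝ) ^ 2 * j.factorial) * μ ^ (2 * v - j)
        ≤ (2 ^ v * (v : ℝ) ^ j) * μ ^ (2 * v - j) := by
          apply mul_le_mul_of_nonneg_right hreal (by positivity)
      _ = (2 ^ v * (v : ℝ) ^ j) * (μ ^ (2 * v - 1 - j) * μ) := by rw [hμpow]
      _ ≤ (2 ^ v * (L / 2) ^ j) * (L ^ (2 * v - 1 - j) * μ) := by
          have hb : (0:ℝ) ≤ (L / 2) ^ j := by positivity
          apply mul_le_mul (by gcongr) (by gcongr) (by positivity) (by positivity)
      _ = 2 ^ v * ((L / 2) ^ j * L ^ (2 * v - 1 - j)) * μ := by ring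
      _ ≤ 2 ^ v * L ^ (2 * v - 1) * μ := by
          have h2v0 : (0:ℝ) ≤ (2:ℝ) ^ v := by positivity
          apply mul_le_mul_of_nonneg_right (mul_le_mul_of_nonneg_left hLhalf h2v0) hμ0
  have hsumbound : ∑ j ∈ Finset.range (v + 1),
      ((v.choose j : ℝ) ^ 2 * j.factorial) * μ ^ (2 * v - j)
        ≤ 4 ^ v * L ^ (2 * v - 1) * μ := by
    calc ∑ j ∈ Finset.range (v + 1),
          ((v.choose j : ℝ) ^ 2 * j.factorial) * μ ^ (2 * v - j)
        ≤ ∑ _j ∈ Finset.range (v + 1), 2 ^ v * L ^ (2 * v - 1) * μ :=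
          Finset.sum_le_sum hterm
      _ = (v + 1 : ℝ) * (2 ^ v * L ^ (2 * v - 1) * μ) := by
          rw [Finset.sum_const, Finset.card_range]
          push_cast; ring
      _ ≤ (2 : ℝ) ^ v * (2 ^ v * L ^ (2 * v - 1) * μ) := by
          have hcast : (v + 1 : ℝ) ≤ (2 : ℝ) ^ v := by
            exact_mod_cast Nat.lt_two_pow_self (n := v)
          have hnn : (0:ℝ) ≤ 2 ^ v * L ^ (2 * v - 1) * μ := by positivity
          exact mul_le_mul_of_nonneg_right hcast hnn
      _ = 4 ^ v * L ^ (2 * v - 1) * μ := by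
          rw [show (4 : ℝ) ^ v = 2 ^ v * 2 ^ v by rw [← mul_pow]; norm_num]
          ring
  -- step 3: conclude
  have hfinal : (1 / (n : ℝ) ^ (2 * v)) * (4 ^ v * L ^ (2 * v - 1) * μ)
      = 2 * p * (2 * L / n) ^ (2 * v - 1) := by
    have h4 : (4 : ℝ) ^ v = 2 * 2 ^ (2 * v - 1) := by
      rw [show (4 : ℝ) = 2 ^ 2 by norm_num, ← pow_mul, ← pow_succ']
      congr 1
      omega
    have hnpow : (n : ℝ) ^ (2 * v) = (n : ℝ) ^ (2 * v - 1) * n := by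
      rw [← pow_succ]
      congr 1
      omega
    rw [div_pow, mul_pow, h4, hnpow, hμ]
    field_simp
    ring
  calc (1 / (n : ℝ) ^ (2 * v)) * ∑ j ∈ Finset.range (v + 1),
        ((v.choose j : ℝ) ^ 2 * j.factorial) * μ ^ (2 * v - j)
      ≤ (1 / (n : ℝ) ^ (2 * v)) * (4 ^ v * L ^ (2 * v - 1) * μ) := by
        have hnn : (0:ℝ) ≤ 1 / (n : ℝ) ^ (2 * v) := by positivity
        exact mul_le_mul_of_nonneg_left hsumbound hnn
    _ = 2 * p * (2 * c' * Real.log n / n) ^ (2 * v - 1) := by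
        rw [hfinal, hL]
        ring_nf
  done
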